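/- Let v_1,...,v_I be i.i.d. nonnegative random variables with E[v_i²] = 1-δ for δ ∈ [0,1), and let Γ_S = sqrt(I(1-δ)(1+I-I·ξ)/(1-ξ)) for ξ ∈ (0,1). Then P(Σ_i v_i ≥ Γ_S) ≤ 1-ξ. -/

import Mathlib

open MeasureTheory ProbabilityTheory

/-- For i.i.d. nonnegative random variables with common second moment `1 - δ`, the sum
satisfies `P(Σ_i v_i ≥ Γ_S) ≤ 1 - ξ` with `Γ_S = √(I(1-δ)(1+I-Iξ)/(1-ξ))`. -/
theorem sum_exceeds_GammaS_bound
    {Ω : Type*} {mΩ : MeasurableSpace Ω} (μ : Measure Ω) [IsProbabilityMeasure μ]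
    (I : ℕ) (hI : 1 ≤ I) (v : Fin I → Ω → ℝ)
    (hmeas : ∀ i, Measurable (v i))
    (hindep : iIndepFun (m := fun _ => Real.measurableSpace) v μ)
    (hident : ∀ i j, Measure.map (v i) μ = Measure.map (v j) μ)
    (hL2 : ∀ i, MemLp (v i) 2 μ)
    (hpos : ∀ i, ∀ᵐ ω ∂μ, 0 ≤ v i ω)
    (δ : ℝ) (hδ0 : 0 ≤ δ) (hδ1 : δ < 1)
    (hmom : ∀ i, μ[fun ω => (v i ω) ^ 2] = 1 - δ)
    (ξ : ℝ) (hξ0 : 0 < ξ) (hξ1 : ξ < 1)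
    (ΓS : ℝ)
    (hΓS : ΓS = Real.sqrt ((I : ℝ) * (1 - δ) * (1 + (I : ℝ) - (I : ℝ) * ξ) / (1 - ξ))) :
    μ {ω | ΓS ≤ ∑ i, v i ω} ≤ ENNReal.ofReal (1 - ξ) := by
  classical
  have hI0 : (0:ℝ) < (I:ℝ) := by exact_mod_cast hI
  set i0 : Fin I := ⟨0, hI⟩
  set m : ℝ := μ[v i0] with hm_def
  -- all means coincide
  have hm_eq : ∀ i, μ[v i] = m := by
    intro i
    have h1 : μ[v i] = ∫ x, x ∂(Measure.map (v i) μ) :=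
      (integral_map (hmeas i).aemeasurable aestronglyMeasurable_id).symm
    have h2 : μ[v i0] = ∫ x, x ∂(Measure.map (v i0) μ) :=
      (integral_map (hmeas i0).aemeasurable aestronglyMeasurable_id).symm
    rw [hm_def, h1, h2, hident i i0]
  have hm0 : 0 ≤ m := integral_nonneg_of_ae (hpos i0)
  -- variance of each v i
  have hvar : ∀ i, variance (v i) μ = (1 - δ) - m ^ 2 := by
    intro i
    rw [variance_eq_sub (hL2 i)]
    have : μ[(v i) ^ 2] = 1 - δ := by
      simpa [Pi.pow_apply] using hmom i
    rw [this, hm_eq i]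
  have hm2 : m ^ 2 ≤ 1 - δ := by
    have := variance_nonneg (v i0) μ
    rw [hvar i0] at this; linarith
  -- sum
  have hSL2 : MemLp (∑ i, v i) 2 μ := memLp_finset_sum' _ (fun i _ => hL2 i)
  have hES : μ[∑ i, v i] = (I:ℝ) * m := by
    have : μ[∑ i, v i] = ∑ i : Fin I, μ[v i] := by
      rw [← integral_finset_sum]
      · simp
      · exact fun i _ => (hL2 i).integrable one_le_two
    rw [this]
    simp [hm_eq, Finset.sum_const, mul_comm]
  have hVarS : variance (∑ i, v i) μ = (I:ℝ) * ((1 - δ) - m ^ 2) := by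
    rw [ProbabilityTheory.IndepFun.variance_sum (fun i _ => hL2 i)
      (fun i _ j _ hij => hindep.indepFun hij)]
    simp [hvar, Finset.sum_const, mul_comm]
    ring
  -- Γ facts
  have hξ' : (0:ℝ) < 1 - ξ := by linarith
  have hA : (0:ℝ) ≤ (I : ℝ) * (1 - δ) * (1 + (I : ℝ) - (I : ℝ) * ξ) / (1 - ξ) := by
    have h1 : (0:ℝ) ≤ 1 + (I:ℝ) - (I:ℝ) * ξ := by nlinarith
    apply div_nonneg _ (by linarith)
    apply mul_nonneg (mul_nonneg hI0.le (by linarith)) h1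
  have hΓ0 : 0 ≤ ΓS := hΓS ▸ Real.sqrt_nonneg _
  have hΓsq : ΓS ^ 2 = (I : ℝ) * (1 - δ) * (1 + (I : ℝ) - (I : ℝ) * ξ) / (1 - ξ) := by
    rw [hΓS, Real.sq_sqrt hA]
  have hΓsq' : (1 - ξ) * ΓS ^ 2 = (I : ℝ) * (1 - δ) * (1 + (I : ℝ) - (I : ℝ) * ξ) := by
    rw [hΓsq]; field_simp
  -- ΓS > I * m
  have hc : 0 < ΓS - (I:ℝ) * m := by
    have h1 : ((I:ℝ) * m) ^ 2 < ΓS ^ 2 := by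
      have : ((I:ℝ) * m) ^ 2 ≤ (I:ℝ)^2 * (1 - δ) := by nlinarith
      nlinarith [mul_pos (mul_pos hI0 (by linarith : (0:ℝ) < 1 - δ)) hξ']
    nlinarith
  -- Chebyshev
  have hcheb := meas_ge_le_variance_div_sq (μ := μ) hSL2 hc
  have hsub : {ω | ΓS ≤ ∑ i, v i ω} ⊆
      {ω | ΓS - (I:ℝ) * m ≤ |(∑ i, v i) ω - μ[∑ i, v i]|} := by
    intro ω hω
    simp only [Set.mem_setOf_eq] at hω ⊢
    rw [hES]
    have : ΓS - (I:ℝ) * m ≤ (∑ i, v i) ω - (I:ℝ) * m := by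
      simp only [Finset.sum_apply]; linarith
    exact this.trans (le_abs_self _)
  refine (measure_mono hsub).trans (hcheb.trans ?_)
  apply ENNReal.ofReal_le_ofReal
  rw [div_le_iff₀ (by positivity)]
  rw [hVarS]
  -- key algebraic inequality
  nlinarith [sq_nonneg (((I:ℝ) * (1 - ξ) + 1) * m - (1 - ξ) * ΓS),
    mul_pos hI0 hξ', sq_nonneg m, mul_nonneg hI0.le hm0,
    mul_nonneg (mul_nonneg hI0.le hI0.le) (sq_nonneg m)]
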